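/- arXiv:1603.09736 — 4 statements merged into one kernel-verified Lean document; each statement's English description precedes it below -/
import Mathlib

section
/- Let A be a bounded positive definite self-adjoint operator on a Hilbert space H and let P be an orthogonal projection on H. Then P (PAP|_{ran P})^{-1} P ≤ P A^{-1} P as quadratic forms, i.e., for all u ∈ ran P, ⟨u, (PAP|_{ran P})^{-1} u⟩ ≤ ⟨u, A^{-1} u⟩. -/
open scoped InnerProductSpace

/-- If `A` is a bounded positive definite self-adjoint operator with inverse `A'`, `P` an
orthogonal projection, and `B` the inverse of `PAP` restricted to `ran P` (i.e. `B` maps into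
`ran P` and inverts `PAP` there), then `P (PAP|_{ran P})⁻¹ P ≤ P A⁻¹ P` as quadratic forms:
for all `u ∈ ran P`, `⟨u, B u⟩ ≤ ⟨u, A' u⟩`. -/
theorem proj_inv_proj_le {H : Type*} [NormedAddCommGroup H] [InnerProductSpace ℂ H]
    [CompleteSpace H] (A A' P B : H →L[ℂ] H)
    (hA : IsSelfAdjoint A) (c : ℝ) (hc : 0 < c)
    (hcoer : ∀ u : H, c * ‖u‖ ^ 2 ≤ (⟪u, A u⟫_ℂ).re)
    (hAA' : A ∘L A' = 1) (hA'A : A' ∘L A = 1)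
    (hP : IsSelfAdjoint P) (hP2 : P ∘L P = P)
    (hBself : IsSelfAdjoint B) (hBran : P ∘L B ∘L P = B)
    (hinv1 : (P ∘L A ∘L P) ∘L B = P) (hinv2 : B ∘L (P ∘L A ∘L P) = P) :
    ∀ u : H, P u = u → (⟪u, B u⟫_ℂ).re ≤ (⟪u, A' u⟫_ℂ).re := by
  intro u hu
  set x := B u with hx
  set y := A' u with hy
  -- B u lies in range of P
  have hBu : P x = x := by
    conv_rhs => rw [hx, ← hBran]
    simp [ContinuousLinearMap.comp_apply, hu, hx]
  have hAy : A y = u := by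
    have := congrArg (fun T : H →L[ℂ] H => T u) hAA'
    simpa [ContinuousLinearMap.comp_apply] using this
  have hPAPx : P (A (P x)) = u := by
    have := congrArg (fun T : H →L[ℂ] H => T u) hinv1
    simpa [ContinuousLinearMap.comp_apply, hu] using this
  -- key inner product identities
  have h1 : ⟪x, A x⟫_ℂ = ⟪x, u⟫_ℂ := by
    calc ⟪x, A x⟫_ℂ = ⟪P x, A (P x)⟫_ℂ := by rw [hBu]
      _ = ⟪x, P (A (P x))⟫_ℂ := hP.isSymmetric _ _
      _ = ⟪x, u⟫_ℂ := by rw [hPAPx]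
  have h3 : ⟪x, A y⟫_ℂ = ⟪x, u⟫_ℂ := by rw [hAy]
  have h4 : ⟪y, A x⟫_ℂ = starRingEnd ℂ ⟪x, u⟫_ℂ := by
    have hs := hA.isSymmetric y x
    simp only [ContinuousLinearMap.coe_coe] at hs
    rw [← hs, hAy, ← inner_conj_symm]
  have key : (⟪y - x, A (y - x)⟫_ℂ).re = (⟪u, A' u⟫_ℂ).re - (⟪u, B u⟫_ℂ).re := by
    have hexp : ⟪y - x, A (y - x)⟫_ℂ
        = ⟪y, A y⟫_ℂ - ⟪y, A x⟫_ℂ - ⟪x, A y⟫_ℂ + ⟪x, A x⟫_ℂ := by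
      rw [map_sub, inner_sub_left, inner_sub_right, inner_sub_right]
      ring
    rw [hexp, h1, h3, h4, hAy]
    have e1 : (⟪u, B u⟫_ℂ).re = (⟪x, u⟫_ℂ).re := by
      rw [← inner_conj_symm, Complex.conj_re]
    have e2 : (⟪u, A' u⟫_ℂ).re = (⟪y, u⟫_ℂ).re := by
      rw [← inner_conj_symm, Complex.conj_re]
    simp only [Complex.add_re, Complex.sub_re, Complex.conj_re, e1, e2]
    ring
  have hpos : 0 ≤ (⟪y - x, A (y - x)⟫_ℂ).re := by
    refine le_trans ?_ (hcoer (y - x))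
    positivity
  linarith [key ▸ hpos]
end

section
/- Let f_l(μ) = Σ_n (e_n - μ)_- for a nondecreasing sequence 0 ≤ e_1 ≤ e_2 ≤ … tending to infinity, and f_r(μ) = C μ^{1+d/(2s)} for μ > 0 with constant C = L^cl_{1,d,s}|Ω|. Then the inequality f_l(μ) ≤ f_r(μ) for all μ > 0 is equivalent to the inequality Σ_{n=1}^N e_n ≥ C' N^{1+2s/d} for all N ∈ ℕ, where C' = (d/(d+2s)) (2π)^{2s} ω_d^{-2s/d} |Ω|^{-2s/d}, via Legendre duality: the Legendre transforms of the convex functions f_l and f_r are respectively the piecewise linear interpolation of N ↦ Σ_{n=1}^N e_n and ν ↦ C' ν^{1+2s/d}, and the Legendre transform reverses inequalities between convex functions. -/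
open MeasureTheory Real

/-- Abstract Legendre-duality core: for a monotone sequence tending to infinity,
the bound `∑ (μ - eₙ)₊ ≤ K/(1+c) μ^{1+c}` for all `μ > 0` is equivalent to
`∑_{n<N} eₙ ≥ c/(c+1) K^{-1/c} N^{1+1/c}` for all `N ≥ 1`. -/
lemma berezin_core (c K : ℝ) (hc : 0 < c) (hK : 0 < K)
    (e : ℕ → ℝ) (hmono : Monotone e)
    (htop : Filter.Tendsto e Filter.atTop Filter.atTop) :
    (∀ μ : ℝ, 0 < μ → ∑' n : ℕ, max (μ - e n) 0 ≤ K / (1 + c) * μ ^ (1 + c)) ↔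
    (∀ N : ℕ, 1 ≤ N → ∑ n ∈ Finset.range N, e n ≥
      c / (c + 1) * K ^ (-(1 / c)) * (N : ℝ) ^ (1 + 1 / c)) := by
  have hc1 : (0:ℝ) < 1 + c := by linarith
  have hKneg : K ^ (-(1 / c)) = (K ^ (1 / c))⁻¹ := Real.rpow_neg hK.le _
  have hKcpos : 0 < K ^ (1 / c) := Real.rpow_pos_of_pos hK _
  constructor
  · intro hA N hN
    have hNpos : (0:ℝ) < N := by exact_mod_cast hN
    have hNK : (0:ℝ) < (N : ℝ) / K := div_pos hNpos hK
    set μ : ℝ := ((N : ℝ) / K) ^ (1 / c) with hμdef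
    have hμ : 0 < μ := Real.rpow_pos_of_pos hNK _
    -- summability / finiteness
    obtain ⟨M, hM⟩ := (htop.eventually_ge_atTop μ).exists_forall_of_atTop
    have hzero : ∀ n ∉ Finset.range (max M N), max (μ - e n) 0 = 0 := by
      intro n hn
      simp only [Finset.mem_range, not_lt] at hn
      have : μ ≤ e n := hM n (le_trans (le_max_left _ _) hn)
      exact max_eq_right (by linarith)
    have hsm : Summable (fun n => max (μ - e n) 0) := summable_of_ne_finset_zero hzero
    have key : (N : ℝ) * μ - ∑ n ∈ Finset.range N, e n ≤ K / (1 + c) * μ ^ (1 + c) := by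
      have h1 : ∑ n ∈ Finset.range N, (μ - e n) ≤ ∑ n ∈ Finset.range N, max (μ - e n) 0 :=
        Finset.sum_le_sum fun n _ => le_max_left _ _
      have h2 : ∑ n ∈ Finset.range N, max (μ - e n) 0 ≤ ∑' n : ℕ, max (μ - e n) 0 :=
        hsm.sum_le_tsum _ (fun n _ => le_max_right _ _)
      have h3 := hA μ hμ
      have h4 : ∑ n ∈ Finset.range N, (μ - e n)
          = (N : ℝ) * μ - ∑ n ∈ Finset.range N, e n := by
        rw [Finset.sum_sub_distrib, Finset.sum_const, Finset.card_range, nsmul_eq_mul]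
      linarith
    have hμc : μ ^ c = (N : ℝ) / K := by
      rw [hμdef, ← Real.rpow_mul hNK.le]
      rw [show 1 / c * c = 1 by field_simp, Real.rpow_one]
    have hμ1c : μ ^ (1 + c) = μ * ((N : ℝ) / K) := by
      rw [Real.rpow_add hμ, Real.rpow_one, hμc]
    have hμ_eq : μ = (N : ℝ) ^ (1 / c) / K ^ (1 / c) := Real.div_rpow hNpos.le hK.le _
    have hNp : (N : ℝ) ^ (1 + 1 / c) = (N : ℝ) * (N : ℝ) ^ (1 / c) := by
      rw [Real.rpow_add hNpos, Real.rpow_one]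
    have hRHS : K / (1 + c) * μ ^ (1 + c) = (N : ℝ) * μ / (1 + c) := by
      rw [hμ1c]; field_simp
    have htarget : c / (c + 1) * K ^ (-(1 / c)) * (N : ℝ) ^ (1 + 1 / c)
        = (N : ℝ) * μ - (N : ℝ) * μ / (1 + c) := by
      rw [hKneg, hNp, hμ_eq]
      field_simp
      ring
    rw [ge_iff_le, htarget]
    linarith [key, hRHS ▸ key]
  · intro hB μ hμ
    have hex : ∃ n, μ ≤ e n := (htop.eventually_ge_atTop μ).exists
    set N := Nat.find hex with hNdef
    have hge : ∀ n, N ≤ n → μ ≤ e n := fun n hn => (Nat.find_spec hex).trans (hmono hn)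
    have hlt : ∀ n, n < N → e n < μ := fun n hn => lt_of_not_ge (Nat.find_min hex hn)
    have hzero : ∀ n ∉ Finset.range N, max (μ - e n) 0 = 0 := by
      intro n hn
      simp only [Finset.mem_range, not_lt] at hn
      exact max_eq_right (by linarith [hge n hn])
    have htsum : ∑' n : ℕ, max (μ - e n) 0
        = (N : ℝ) * μ - ∑ n ∈ Finset.range N, e n := by
      rw [tsum_eq_sum hzero]
      rw [show ∑ n ∈ Finset.range N, max (μ - e n) 0 = ∑ n ∈ Finset.range N, (μ - e n) from
        Finset.sum_congr rfl fun n hn =>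
          max_eq_left (by linarith [hlt n (Finset.mem_range.mp hn)])]
      rw [Finset.sum_sub_distrib, Finset.sum_const, Finset.card_range, nsmul_eq_mul]
    rw [htsum]
    rcases Nat.eq_zero_or_pos N with hN0 | hN1
    · rw [hN0]
      simp only [Nat.cast_zero, zero_mul, Finset.range_zero, Finset.sum_empty, sub_zero]
      positivity
    · have hBN := hB N hN1
      have hNpos : (0:ℝ) < N := by exact_mod_cast hN1
      -- Young's inequality with conjugate exponents 1+c and 1+1/c
      have hpq : (1 + c).HolderConjugate (1 + 1 / c) := by
        rw [Real.holderConjugate_iff]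
        constructor
        · linarith
        · rw [inv_eq_one_div, inv_eq_one_div]
          field_simp
          ring
      have hKp : 0 < K ^ (1 / (1 + c)) := Real.rpow_pos_of_pos hK _
      have hy := Real.young_inequality_of_nonneg
        (mul_nonneg hKp.le hμ.le) (div_nonneg hNpos.le hKp.le) hpq
      have hab : K ^ (1 / (1 + c)) * μ * ((N : ℝ) / K ^ (1 / (1 + c))) = (N : ℝ) * μ := by
        field_simp
      have ha : (K ^ (1 / (1 + c)) * μ) ^ (1 + c) = K * μ ^ (1 + c) := by
        rw [Real.mul_rpow hKp.le hμ.le, ← Real.rpow_mul hK.le]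
        rw [show 1 / (1 + c) * (1 + c) = 1 by field_simp, Real.rpow_one]
      have hb : ((N : ℝ) / K ^ (1 / (1 + c))) ^ (1 + 1 / c)
          = (N : ℝ) ^ (1 + 1 / c) / K ^ (1 / c) := by
        rw [Real.div_rpow hNpos.le hKp.le, ← Real.rpow_mul hK.le]
        rw [show 1 / (1 + c) * (1 + 1 / c) = 1 / c by
          rw [div_mul_eq_mul_div, one_mul, div_eq_div_iff (by positivity) hc.ne']
          field_simp
          ring]
      rw [hab, ha, hb] at hy
      have hq : (N : ℝ) ^ (1 + 1 / c) / K ^ (1 / c) / (1 + 1 / c)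
          = c / (c + 1) * K ^ (-(1 / c)) * (N : ℝ) ^ (1 + 1 / c) := by
        rw [hKneg]
        field_simp
      rw [hq] at hy
      have : K * μ ^ (1 + c) / (1 + c) = K / (1 + c) * μ ^ (1 + c) := by ring
      linarith [hy, hBN]

/-- Berezin–Li–Yau equivalence via Legendre duality: for a nondecreasing sequence
`0 ≤ e₁ ≤ e₂ ≤ … → ∞`, the Berezin-type bound
`Σ_n (e_n - μ)_- ≤ L^cl_{1,d,s} |Ω| μ^{1+d/(2s)}` for all `μ > 0` is equivalent to the
Li–Yau-type bound `Σ_{n=1}^N e_n ≥ (d/(d+2s)) (2π)^{2s} ω_d^{-2s/d} |Ω|^{-2s/d} N^{1+2s/d}`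
for all `N ≥ 1`, where `ω_d = π^{d/2}/Γ(d/2+1)` and
`L^cl_{1,d,s} = (ω_d/(2π)^d) Γ(2) Γ(d/(2s)+1)/Γ(1+d/(2s)+1)`. -/
theorem berezin_iff_liYau (d : ℕ) (hd : 1 ≤ d) (s : ℝ) (hs0 : 0 < s) (hs1 : s ≤ 1)
    (vol : ℝ) (hvol : 0 < vol) (e : ℕ → ℝ) (he0 : 0 ≤ e 0) (hmono : Monotone e)
    (htop : Filter.Tendsto e Filter.atTop Filter.atTop) :
    (∀ μ : ℝ, 0 < μ →
        ∑' n : ℕ, max (μ - e n) 0 ≤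
          (π ^ ((d : ℝ) / 2) / Real.Gamma ((d : ℝ) / 2 + 1)) / (2 * π) ^ (d : ℝ) *
              (Real.Gamma 2 * Real.Gamma ((d : ℝ) / (2 * s) + 1) /
                Real.Gamma (1 + (d : ℝ) / (2 * s) + 1)) *
            vol * μ ^ (1 + (d : ℝ) / (2 * s))) ↔
      (∀ N : ℕ, 1 ≤ N →
        ∑ n ∈ Finset.range N, e n ≥
          (d : ℝ) / ((d : ℝ) + 2 * s) * (2 * π) ^ (2 * s) *
              (π ^ ((d : ℝ) / 2) / Real.Gamma ((d : ℝ) / 2 + 1)) ^ (-(2 * s) / (d : ℝ)) *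
            vol ^ (-(2 * s) / (d : ℝ)) * (N : ℝ) ^ (1 + 2 * s / (d : ℝ))) := by
  have hd0 : (0:ℝ) < d := by exact_mod_cast hd
  have hπ : (0:ℝ) < π := Real.pi_pos
  set c : ℝ := (d : ℝ) / (2 * s) with hcdef
  have hc : 0 < c := by positivity
  set ω : ℝ := π ^ ((d : ℝ) / 2) / Real.Gamma ((d : ℝ) / 2 + 1) with hωdef
  have hω : 0 < ω := by
    apply div_pos (Real.rpow_pos_of_pos hπ _)
    exact Real.Gamma_pos_of_pos (by positivity)
  have h2π : (0:ℝ) < (2 * π) ^ (d : ℝ) := Real.rpow_pos_of_pos (by positivity) _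
  set K : ℝ := ω * vol / (2 * π) ^ (d : ℝ) with hKdef
  have hK : 0 < K := by positivity
  -- first constant
  have hΓ : Real.Gamma (1 + c + 1) = (c + 1) * Real.Gamma (c + 1) := by
    rw [show (1:ℝ) + c + 1 = (c + 1) + 1 by ring,
      Real.Gamma_add_one (by positivity : c + 1 ≠ 0)]
  have hΓpos : 0 < Real.Gamma (c + 1) := Real.Gamma_pos_of_pos (by positivity)
  have h1 : ω / (2 * π) ^ (d : ℝ) *
      (Real.Gamma 2 * Real.Gamma (c + 1) / Real.Gamma (1 + c + 1)) * vol
      = K / (1 + c) := by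
    rw [Real.Gamma_two, hΓ, hKdef]
    field_simp
    ring
  -- exponent identities
  have hinv : 2 * s / (d : ℝ) = 1 / c := by
    rw [hcdef]
    field_simp
  have hinv' : -(2 * s) / (d : ℝ) = -(1 / c) := by
    rw [← hinv]; ring
  -- second constant
  have h2 : (d : ℝ) / ((d : ℝ) + 2 * s) * (2 * π) ^ (2 * s) *
      ω ^ (-(2 * s) / (d : ℝ)) * vol ^ (-(2 * s) / (d : ℝ))
      = c / (c + 1) * K ^ (-(1 / c)) := by
    have hfrac : (d : ℝ) / ((d : ℝ) + 2 * s) = c / (c + 1) := by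
      rw [hcdef]
      rw [div_eq_div_iff (by positivity) (by positivity)]
      field_simp
    have h2πc : (2 * π) ^ (2 * s) = ((2 * π) ^ (d : ℝ)) ^ (1 / c) := by
      rw [← Real.rpow_mul (by positivity : (0:ℝ) ≤ 2 * π)]
      congr 1
      rw [hcdef]
      field_simp
    have hKneg : K ^ (-(1 / c)) = ((2 * π) ^ (d : ℝ)) ^ (1 / c) *
        (ω ^ (1 / c))⁻¹ * (vol ^ (1 / c))⁻¹ := by
      rw [hKdef, Real.rpow_neg hK.le, Real.div_rpow (by positivity) h2π.le,
        Real.mul_rpow hω.le hvol.le]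
      rw [inv_div, div_eq_mul_inv, mul_inv]
      ring
    rw [hfrac, h2πc, hinv', Real.rpow_neg hω.le, Real.rpow_neg hvol.le, hKneg]
    ring
  rw [h1, h2, hinv]
  exact berezin_core c K hc hK e hmono htop
end

section
/- (Garsia–Rodemich–Rumsey consequence) Let 1/2 < s < 1 and let φ be a continuous function on [a,b] such that the double integral ∫_a^b ∫_a^b |φ(x)-φ(y)|²/|x-y|^{1+2s} dx dy is finite. Then |φ(a)-φ(b)|² ≤ D_s (b-a)^{2s-1} ∫_a^b ∫_a^b |φ(x)-φ(y)|²/|x-y|^{1+2s} dx dy with D_s = (16(2s+1)/(2s-1))². -/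
open MeasureTheory

lemma grr_conj : Real.HolderConjugate 2 2 := by constructor <;> norm_num

lemma grr_cs {α : Type*} [MeasurableSpace α] (μ : Measure α) [IsFiniteMeasure μ]
    (f : α → ℝ) (hf : ∀ x, 0 ≤ f x) (hm : AEStronglyMeasurable f μ)
    (h2 : Integrable (fun x => f x ^ 2) μ) :
    ∫ x, f x ∂μ ≤ Real.sqrt (μ Set.univ).toReal * Real.sqrt (∫ x, f x ^ 2 ∂μ) := by
  have hmem : MemLp f 2 μ := (memLp_two_iff_integrable_sq hm).2 h2
  have h1 : MemLp (fun _ : α => (1:ℝ)) 2 μ := memLp_const 1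
  have h2' : ENNReal.ofReal (2:ℝ) = 2 := by norm_num
  have := integral_mul_le_Lp_mul_Lq_of_nonneg grr_conj
    (Filter.Eventually.of_forall hf) (Filter.Eventually.of_forall (fun _ => zero_le_one))
    (h2' ▸ hmem) (h2' ▸ h1)
  simp only [mul_one] at this
  calc ∫ x, f x ∂μ ≤ (∫ x, f x ^ (2:ℝ) ∂μ) ^ (1/(2:ℝ)) * (∫ x, (1:ℝ) ^ (2:ℝ) ∂μ) ^ (1/(2:ℝ)) := this
    _ = Real.sqrt (μ Set.univ).toReal * Real.sqrt (∫ x, f x ^ 2 ∂μ) := by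
        rw [mul_comm]
        congr 1
        · rw [Real.sqrt_eq_rpow]; congr 1; simp [measure_univ, measureReal_def]
        · rw [Real.sqrt_eq_rpow]
          congr 1
          refine integral_congr_ae (Filter.Eventually.of_forall fun x => ?_)
          show f x ^ (2:ℝ) = f x ^ (2:ℕ)
          rw [← Real.rpow_natCast (f x) 2]; norm_num

section
variable (s a b : ℝ) (φ : ℝ → ℂ)

/-- the GRR integrand -/
noncomputable def grrF (p : ℝ × ℝ) : ℝ := ‖φ p.1 - φ p.2‖ ^ 2 / |p.1 - p.2| ^ (1 + 2 * s)

/-- the GRR double integral -/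
noncomputable def grrI : ℝ := ∫ p in Set.Icc a b ×ˢ Set.Icc a b, grrF s φ p

lemma grrF_apply (p : ℝ × ℝ) :
    grrF s φ p = ‖φ p.1 - φ p.2‖ ^ 2 / |p.1 - p.2| ^ (1 + 2 * s) := rfl

lemma grrF_nonneg (p : ℝ × ℝ) : 0 ≤ grrF s φ p := by
  unfold grrF
  positivity

lemma grrI_nonneg : 0 ≤ grrI s a b φ :=
  setIntegral_nonneg (measurableSet_Icc.prod measurableSet_Icc) fun p _ => grrF_nonneg s φ p

variable {s a b φ}

lemma avg_diff (hs : 1 / 2 < s) (hab : a < b)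
    (hcont : ContinuousOn φ (Set.Icc a b))
    (hint : IntegrableOn (grrF s φ) (Set.Icc a b ×ˢ Set.Icc a b))
    {p q c e : ℝ} (hcp : c ≤ p) (hpq : p < q) (hqe : q ≤ e) (hac : a ≤ c) (heb : e ≤ b) :
    ‖(q - p)⁻¹ • (∫ x in Set.Icc p q, φ x) - (e - c)⁻¹ • (∫ x in Set.Icc c e, φ x)‖ ≤
      Real.sqrt ((e - c) ^ (1 + 2 * s) / ((q - p) * (e - c)) * grrI s a b φ) := by
  have hce : c < e := lt_of_le_of_lt hcp (lt_of_lt_of_le hpq hqe)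
  have hqp0 : (0:ℝ) < q - p := by linarith
  have hec0 : (0:ℝ) < e - c := by linarith
  set J := Set.Icc p q
  set K := Set.Icc c e
  have hJab : J ⊆ Set.Icc a b := Set.Icc_subset_Icc (by linarith) (by linarith)
  have hKab : K ⊆ Set.Icc a b := Set.Icc_subset_Icc hac heb
  have hJK : J ⊆ K := Set.Icc_subset_Icc hcp hqe
  -- continuity of D on J ×ˢ K
  set D : ℝ × ℝ → ℂ := fun z => φ z.1 - φ z.2 with hD
  have hDc : ContinuousOn D (J ×ˢ K) := by
    apply ContinuousOn.sub
    · exact hcont.comp continuousOn_fst fun z hz => hJab hz.1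
    · exact hcont.comp continuousOn_snd fun z hz => hKab hz.2
  have hJKc : IsCompact (J ×ˢ K) := isCompact_Icc.prod isCompact_Icc
  have hDint : IntegrableOn D (J ×ˢ K) := hDc.integrableOn_compact hJKc
  -- identity
  have hvolJ : (volume J).toReal = q - p := by
    simp [J, Real.volume_Icc, ENNReal.toReal_ofReal hqp0.le]
  have hvolK : (volume K).toReal = e - c := by
    simp [K, Real.volume_Icc, ENNReal.toReal_ofReal hec0.le]
  have hφJ : IntegrableOn φ J := (hcont.mono hJab).integrableOn_compact isCompact_Icc
  have hφK : IntegrableOn φ K := (hcont.mono hKab).integrableOn_compact isCompact_Icc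
  have key : ∫ z in J ×ˢ K, D z =
      (e - c) • (∫ x in J, φ x) - (q - p) • (∫ y in K, φ y) := by
    have h1 : IntegrableOn D (J ×ˢ K) ((volume : Measure ℝ).prod volume) := by
      rwa [← Measure.volume_eq_prod]
    have hKconst : ∀ z : ℂ, IntegrableOn (fun _ : ℝ => z) K := by
      intro z
      refine integrableOn_const ?_
      simp only [K, Real.volume_Icc]
      exact ENNReal.ofReal_ne_top
    have hJconst : ∀ z : ℂ, IntegrableOn (fun _ : ℝ => z) J := by
      intro z
      refine integrableOn_const ?_
      simp only [J, Real.volume_Icc]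
      exact ENNReal.ofReal_ne_top
    rw [show ((volume : Measure (ℝ × ℝ))) = (volume : Measure ℝ).prod volume from rfl]
    rw [setIntegral_prod _ h1]
    have h2 : ∀ x, ∫ y in K, (φ x - φ y) = (e - c) • φ x - ∫ y in K, φ y := by
      intro x
      rw [integral_sub (hKconst (φ x)) hφK, setIntegral_const, measureReal_def, hvolK]
    simp only [hD]
    have h3 : Integrable (fun x => ((e:ℝ)-c) • φ x) (volume.restrict J) := hφJ.smul ((e:ℝ)-c)
    rw [integral_congr_ae (Filter.Eventually.of_forall fun x => h2 x),
      integral_sub h3 (hJconst _), integral_smul, setIntegral_const, measureReal_def, hvolJ]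
  -- rewrite the average difference
  have havg : (q - p)⁻¹ • (∫ x in J, φ x) - (e - c)⁻¹ • (∫ x in K, φ x) =
      ((q - p) * (e - c))⁻¹ • ∫ z in J ×ˢ K, D z := by
    have e1 : ((q - p) * (e - c))⁻¹ * (e - c) = (q - p)⁻¹ := by
      field_simp
    have e2 : ((q - p) * (e - c))⁻¹ * (q - p) = (e - c)⁻¹ := by
      field_simp
    rw [key, smul_sub, smul_smul, smul_smul, e1, e2]
  rw [havg]
  -- finite measure instance
  haveI : IsFiniteMeasure (volume.restrict (J ×ˢ K)) :=
    ⟨by rw [Measure.restrict_apply_univ]; exact hJKc.measure_lt_top⟩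
  have hvolJK : ((volume : Measure (ℝ × ℝ)) (J ×ˢ K)).toReal = (q - p) * (e - c) := by
    rw [show ((volume : Measure (ℝ × ℝ))) = (volume : Measure ℝ).prod volume from rfl,
      Measure.prod_prod, ENNReal.toReal_mul, hvolJ, hvolK]
  have hDn2int : Integrable (fun z => ‖D z‖ ^ 2) (volume.restrict (J ×ˢ K)) :=
    ((hDc.norm.pow 2).integrableOn_compact hJKc)
  -- Cauchy-Schwarz
  have hCS : ∫ z in J ×ˢ K, ‖D z‖ ≤
      Real.sqrt ((q - p) * (e - c)) * Real.sqrt (∫ z in J ×ˢ K, ‖D z‖ ^ 2) := by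
    have := grr_cs (volume.restrict (J ×ˢ K)) (fun z => ‖D z‖) (fun z => norm_nonneg _)
      hDint.norm.1 hDn2int
    rwa [Measure.restrict_apply_univ, hvolJK] at this
  -- comparison with the GRR integral
  set I := grrI s a b φ with hI
  have hI0 : 0 ≤ I := grrI_nonneg s a b φ
  have hsub : J ×ˢ K ⊆ Set.Icc a b ×ˢ Set.Icc a b := Set.prod_mono hJab hKab
  have hFint : IntegrableOn (grrF s φ) (J ×ˢ K) := hint.mono_set hsub
  have hexp0 : (0:ℝ) ≤ 1 + 2 * s := by linarith
  have hD2 : ∫ z in J ×ˢ K, ‖D z‖ ^ 2 ≤ (e - c) ^ (1 + 2 * s) * I := by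
    have step1 : ∫ z in J ×ˢ K, ‖D z‖ ^ 2 ≤
        ∫ z in J ×ˢ K, (e - c) ^ (1 + 2 * s) * grrF s φ z := by
      refine setIntegral_mono_on hDn2int (hFint.const_mul _)
        (measurableSet_Icc.prod measurableSet_Icc) (fun z hz => ?_)
      have hz1 : z.1 ∈ K := hJK hz.1
      have hz2 : z.2 ∈ K := hz.2
      have habs : |z.1 - z.2| ≤ e - c := by
        rw [abs_sub_le_iff]
        constructor <;> [linarith [hz1.1, hz1.2, hz2.1, hz2.2]; linarith [hz1.1, hz1.2, hz2.1, hz2.2]]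
      by_cases hzz : z.1 = z.2
      · have hg : grrF s φ z = 0 := by simp [grrF, hzz]
        simp [hD, hzz, hg]
      · have habs0 : 0 < |z.1 - z.2| := abs_pos.2 (sub_ne_zero.2 hzz)
        have hr0 : 0 < |z.1 - z.2| ^ (1 + 2 * s) := Real.rpow_pos_of_pos habs0 _
        rw [grrF]
        rw [show (e - c) ^ (1 + 2 * s) * (‖φ z.1 - φ z.2‖ ^ 2 / |z.1 - z.2| ^ (1 + 2 * s)) =
          ‖φ z.1 - φ z.2‖ ^ 2 * ((e - c) ^ (1 + 2 * s) / |z.1 - z.2| ^ (1 + 2 * s)) by ring]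
        have h1le : (1:ℝ) ≤ (e - c) ^ (1 + 2 * s) / |z.1 - z.2| ^ (1 + 2 * s) := by
          rw [le_div_iff₀ hr0, one_mul]
          exact Real.rpow_le_rpow habs0.le habs hexp0
        simp only [hD]
        nlinarith [sq_nonneg ‖φ z.1 - φ z.2‖]
    have step2 : ∫ z in J ×ˢ K, (e - c) ^ (1 + 2 * s) * grrF s φ z =
        (e - c) ^ (1 + 2 * s) * ∫ z in J ×ˢ K, grrF s φ z := integral_const_mul _ _
    have step3 : ∫ z in J ×ˢ K, grrF s φ z ≤ I := by
      refine setIntegral_mono_set hint ?_ (HasSubset.Subset.eventuallyLE hsub)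
      exact Filter.Eventually.of_forall fun z => grrF_nonneg s φ z
    calc ∫ z in J ×ˢ K, ‖D z‖ ^ 2 ≤ (e - c) ^ (1 + 2 * s) * ∫ z in J ×ˢ K, grrF s φ z := by
          rw [← step2]; exact step1
      _ ≤ (e - c) ^ (1 + 2 * s) * I := by
          have : (0:ℝ) ≤ (e - c) ^ (1 + 2 * s) := Real.rpow_nonneg hec0.le _
          exact mul_le_mul_of_nonneg_left step3 this
  -- put everything together
  set T := (q - p) * (e - c) with hT
  have hT0 : 0 < T := mul_pos hqp0 hec0
  have step : ‖((q - p) * (e - c))⁻¹ • ∫ z in J ×ˢ K, D z‖ ≤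
      T⁻¹ * (Real.sqrt T * Real.sqrt ((e - c) ^ (1 + 2 * s) * I)) := by
    rw [norm_smul, Real.norm_eq_abs, abs_of_pos (inv_pos.2 hT0)]
    refine mul_le_mul_of_nonneg_left ?_ (inv_pos.2 hT0).le
    calc ‖∫ z in J ×ˢ K, D z‖ ≤ ∫ z in J ×ˢ K, ‖D z‖ := norm_integral_le_integral_norm _
      _ ≤ Real.sqrt T * Real.sqrt (∫ z in J ×ˢ K, ‖D z‖ ^ 2) := hCS
      _ ≤ Real.sqrt T * Real.sqrt ((e - c) ^ (1 + 2 * s) * I) :=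
          mul_le_mul_of_nonneg_left (Real.sqrt_le_sqrt hD2) (Real.sqrt_nonneg _)
  refine step.trans (le_of_eq ?_)
  have hM0 : (0:ℝ) ≤ (e - c) ^ (1 + 2 * s) * I := mul_nonneg (Real.rpow_nonneg hec0.le _) hI0
  have hsT : (0:ℝ) < Real.sqrt T := Real.sqrt_pos.2 hT0
  have hTT : Real.sqrt T * Real.sqrt T = T := Real.mul_self_sqrt hT0.le
  rw [show (e - c) ^ (1 + 2 * s) / ((q - p) * (e - c)) * I =
    ((e - c) ^ (1 + 2 * s) * I) / T from by rw [hT]; ring]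
  rw [Real.sqrt_div hM0]
  rw [eq_div_iff hsT.ne']
  set m := Real.sqrt ((e - c) ^ (1 + 2 * s) * I)
  set u := Real.sqrt T
  -- goal : T⁻¹ * (u * m) * u = m
  field_simp
  nlinarith [hTT, Real.sqrt_nonneg ((e - c) ^ (1 + 2 * s) * I), hT0]
end
open Filter in
lemma tendsto_avg {a b : ℝ} {φ : ℝ → ℂ} (hcont : ContinuousOn φ (Set.Icc a b))
    (x0 : ℝ) (hx0 : x0 ∈ Set.Icc a b) (l m : ℕ → ℝ) (hlm : ∀ n, l n < m n)
    (hsub : ∀ n, Set.Icc (l n) (m n) ⊆ Set.Icc a b)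
    (hx0mem : ∀ n, x0 ∈ Set.Icc (l n) (m n))
    (hlen : Tendsto (fun n => m n - l n) atTop (nhds 0)) :
    Tendsto (fun n => (m n - l n)⁻¹ • ∫ x in Set.Icc (l n) (m n), φ x) atTop (nhds (φ x0)) := by
  rw [Metric.tendsto_atTop]
  intro ε hε
  obtain ⟨δ, hδ, hδ2⟩ := Metric.continuousWithinAt_iff.1 (hcont x0 hx0) (ε/2) (half_pos hε)
  have hev : ∀ᶠ n in atTop, m n - l n < δ := hlen.eventually_lt_const hδ
  obtain ⟨N, hN⟩ := eventually_atTop.1 hev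
  refine ⟨N, fun n hn => ?_⟩
  have hlen0 : 0 < m n - l n := sub_pos.2 (hlm n)
  have hvol : (volume (Set.Icc (l n) (m n))).toReal = m n - l n := by
    simp [Real.volume_Icc, ENNReal.toReal_ofReal hlen0.le]
  have hφint : IntegrableOn φ (Set.Icc (l n) (m n)) :=
    (hcont.mono (hsub n)).integrableOn_compact isCompact_Icc
  have hconst : IntegrableOn (fun _ : ℝ => φ x0) (Set.Icc (l n) (m n)) := by
    refine integrableOn_const ?_
    simp only [Real.volume_Icc]
    exact ENNReal.ofReal_ne_top
  have key : (m n - l n)⁻¹ • (∫ x in Set.Icc (l n) (m n), φ x) - φ x0 =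
      (m n - l n)⁻¹ • ∫ x in Set.Icc (l n) (m n), (φ x - φ x0) := by
    rw [integral_sub hφint hconst, setIntegral_const, measureReal_def, hvol, smul_sub, smul_smul,
      inv_mul_cancel₀ hlen0.ne', one_smul]
  rw [dist_eq_norm, key]
  have hbound : ‖∫ x in Set.Icc (l n) (m n), (φ x - φ x0)‖ ≤ (ε/2) * (m n - l n) := by
    rw [← hvol, ← measureReal_def]
    refine norm_setIntegral_le_of_norm_le_const ?_ (fun x hx => ?_)
    · simp only [Real.volume_Icc]; exact ENNReal.ofReal_lt_top
    · have hxab : x ∈ Set.Icc a b := hsub n hx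
      have hdist : dist x x0 < δ := by
        have h1 := (hx0mem n).1
        have h2 := (hx0mem n).2
        have := hN n hn
        rw [Real.dist_eq, abs_sub_lt_iff]
        constructor <;> linarith [hx.1, hx.2]
      rw [← dist_eq_norm]
      exact (hδ2 hxab hdist).le
  calc ‖(m n - l n)⁻¹ • ∫ x in Set.Icc (l n) (m n), (φ x - φ x0)‖
      = (m n - l n)⁻¹ * ‖∫ x in Set.Icc (l n) (m n), (φ x - φ x0)‖ := by
        rw [norm_smul, Real.norm_eq_abs, abs_of_pos (inv_pos.2 hlen0)]
    _ ≤ (m n - l n)⁻¹ * ((ε/2) * (m n - l n)) :=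
        mul_le_mul_of_nonneg_left hbound (inv_pos.2 hlen0).le
    _ = ε / 2 := by field_simp
    _ < ε := half_lt_self hε


set_option maxHeartbeats 1000000 in
open Filter in
/-- Garsia–Rodemich–Rumsey consequence: for `1/2 < s < 1` and continuous `φ` on `[a,b]` with
finite double integral, `|φ(a)-φ(b)|² ≤ D_s (b-a)^{2s-1} ∬ |φ(x)-φ(y)|²/|x-y|^{1+2s}` with
`D_s = (16(2s+1)/(2s-1))²`. -/
theorem garsia_rodemich_rumsey (s : ℝ) (hs : 1 / 2 < s) (hs1 : s < 1) (a b : ℝ) (hab : a < b)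
    (φ : ℝ → ℂ) (hcont : ContinuousOn φ (Set.Icc a b))
    (hint : IntegrableOn
      (fun p : ℝ × ℝ => ‖φ p.1 - φ p.2‖ ^ 2 / |p.1 - p.2| ^ (1 + 2 * s))
      (Set.Icc a b ×ˢ Set.Icc a b)) :
    ‖φ a - φ b‖ ^ 2 ≤
      (16 * (2 * s + 1) / (2 * s - 1)) ^ 2 * (b - a) ^ (2 * s - 1) *
        ∫ x in Set.Icc a b, ∫ y in Set.Icc a b,
          ‖φ x - φ y‖ ^ 2 / |x - y| ^ (1 + 2 * s) := by
  have hint' : IntegrableOn (grrF s φ) (Set.Icc a b ×ˢ Set.Icc a b) := hint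
  set I := grrI s a b φ with hIdef
  have hI0 : 0 ≤ I := grrI_nonneg s a b φ
  have hba : 0 < b - a := sub_pos.2 hab
  -- the iterated integral equals I
  have hiter : ∫ x in Set.Icc a b, ∫ y in Set.Icc a b,
      ‖φ x - φ y‖ ^ 2 / |x - y| ^ (1 + 2 * s) = I := by
    rw [hIdef, grrI, show ((volume : Measure (ℝ × ℝ))) = (volume : Measure ℝ).prod volume from rfl,
      setIntegral_prod _ hint']
    simp only [grrF_apply]
  rw [hiter]
  -- dyadic scales
  set h : ℕ → ℝ := fun n => (b - a) * (2:ℝ)⁻¹ ^ n with hhdef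
  have hh0 : ∀ n, 0 < h n := fun n => mul_pos hba (by positivity)
  have hhle : ∀ n, h n ≤ b - a := by
    intro n
    have : ((2:ℝ)⁻¹) ^ n ≤ 1 := pow_le_one₀ (by norm_num) (by norm_num)
    calc h n = (b - a) * (2:ℝ)⁻¹ ^ n := rfl
      _ ≤ (b - a) * 1 := mul_le_mul_of_nonneg_left this hba.le
      _ = b - a := mul_one _
  have hhsucc : ∀ n, h (n + 1) = h n / 2 := by
    intro n
    simp only [hhdef, pow_succ]
    ring
  have hhtend : Tendsto h atTop (nhds 0) := by
    have : Tendsto (fun n : ℕ => ((2:ℝ)⁻¹) ^ n) atTop (nhds 0) :=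
      tendsto_pow_atTop_nhds_zero_of_lt_one (by norm_num) (by norm_num)
    simpa [hhdef] using this.const_mul (b - a)
  -- geometric data
  set r : ℝ := (2:ℝ)⁻¹ ^ (s - 1/2) with hrdef
  have hr0 : 0 ≤ r := Real.rpow_nonneg (by norm_num) _
  have hr1 : r < 1 := Real.rpow_lt_one (by norm_num) (by norm_num) (by linarith)
  set K0 : ℝ := Real.sqrt (2 * I) * (b - a) ^ (s - 1/2) with hK0def
  have hK00 : 0 ≤ K0 := mul_nonneg (Real.sqrt_nonneg _) (Real.rpow_nonneg hba.le _)
  set d : ℕ → ℝ := fun n => K0 * r ^ n with hddef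
  -- key : sqrt argument equals (d n)^2
  have hsq : ∀ n, h n ^ (1 + 2*s) / (h (n+1) * h n) * I = (d n) ^ 2 := by
    intro n
    have h1 : h n ^ (1 + 2*s) = h n ^ (2*s - 1) * h n ^ (2:ℕ) := by
      rw [← Real.rpow_natCast (h n) 2, ← Real.rpow_add (hh0 n)]
      rw [show 2*s - 1 + ((2:ℕ):ℝ) = 1 + 2*s from by push_cast; ring]
    have h2 : h n ^ (2*s-1) = (b - a) ^ (2*s-1) * (((2:ℝ)⁻¹ ^ (2*s-1)) ^ n) := by
      rw [hhdef]
      rw [Real.mul_rpow hba.le (by positivity)]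
      congr 1
      rw [← Real.rpow_natCast ((2:ℝ)⁻¹) n, ← Real.rpow_mul (by norm_num), mul_comm,
        Real.rpow_mul (by norm_num), Real.rpow_natCast]
    have h3 : (d n) ^ 2 = K0 ^ 2 * (r ^ 2) ^ n := by rw [hddef]; ring
    have h4 : K0 ^ 2 = 2 * I * (b - a) ^ (2*s-1) := by
      rw [hK0def, mul_pow, Real.sq_sqrt (show (0:ℝ) ≤ 2*I by linarith),
        ← Real.rpow_natCast ((b-a) ^ (s-1/2)) 2, ← Real.rpow_mul hba.le]
      rw [show (s - 1/2) * ((2:ℕ):ℝ) = 2*s - 1 from by push_cast; ring]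
    have h5 : r ^ 2 = (2:ℝ)⁻¹ ^ (2*s-1) := by
      rw [hrdef, ← Real.rpow_natCast ((2:ℝ)⁻¹ ^ (s-1/2)) 2,
        ← Real.rpow_mul (show (0:ℝ) ≤ 2⁻¹ by norm_num)]
      rw [show (s - 1/2) * ((2:ℕ):ℝ) = 2*s - 1 from by push_cast; ring]
    rw [h3, h4, h5, hhsucc n, h1, h2]
    have := (hh0 n).ne'
    field_simp
  -- step bounds
  set u : ℕ → ℂ := fun n => (h n)⁻¹ • ∫ x in Set.Icc a (a + h n), φ x with hudef
  set v : ℕ → ℂ := fun n => (h n)⁻¹ • ∫ x in Set.Icc (b - h n) b, φ x with hvdef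
  have hustep : ∀ n, dist (u n) (u (n+1)) ≤ d n := by
    intro n
    have hd := avg_diff (a := a) (b := b) hs hab hcont hint'
      (p := a) (q := a + h (n+1)) (c := a) (e := a + h n)
      le_rfl (by linarith [hh0 (n+1)]) (by have := hhsucc n; have := hh0 n; linarith)
      le_rfl (by linarith [hhle n])
    simp only [add_sub_cancel_left] at hd
    rw [dist_comm, dist_eq_norm]
    calc ‖u (n+1) - u n‖ ≤ Real.sqrt (h n ^ (1 + 2*s) / (h (n+1) * h n) * I) := hd
      _ = d n := by rw [hsq n, Real.sqrt_sq (by positivity)]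
  have hvstep : ∀ n, dist (v n) (v (n+1)) ≤ d n := by
    intro n
    have hd := avg_diff (a := a) (b := b) hs hab hcont hint'
      (p := b - h (n+1)) (q := b) (c := b - h n) (e := b)
      (by have := hhsucc n; have := hh0 n; linarith) (by linarith [hh0 (n+1)]) le_rfl
      (by linarith [hhle n]) le_rfl
    simp only [sub_sub_cancel] at hd
    rw [dist_comm, dist_eq_norm]
    calc ‖v (n+1) - v n‖ ≤ Real.sqrt (h n ^ (1 + 2*s) / (h (n+1) * h n) * I) := hd
      _ = d n := by rw [hsq n, Real.sqrt_sq (by positivity)]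
  -- limits
  have hutend : Tendsto u atTop (nhds (φ a)) := by
    have := tendsto_avg hcont a (Set.left_mem_Icc.2 hab.le) (fun _ => a) (fun n => a + h n)
      (fun n => by show a < a + h n; linarith [hh0 n])
      (fun n => Set.Icc_subset_Icc le_rfl (by show a + h n ≤ b; linarith [hhle n]))
      (fun n => Set.left_mem_Icc.2 (by show a ≤ a + h n; linarith [hh0 n]))
      (by simpa using hhtend)
    simpa [hudef] using this
  have hvtend : Tendsto v atTop (nhds (φ b)) := by
    have := tendsto_avg hcont b (Set.right_mem_Icc.2 hab.le) (fun n => b - h n) (fun _ => b)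
      (fun n => by show b - h n < b; linarith [hh0 n])
      (fun n => Set.Icc_subset_Icc (by show a ≤ b - h n; linarith [hhle n]) le_rfl)
      (fun n => Set.right_mem_Icc.2 (by show b - h n ≤ b; linarith [hh0 n]))
      (by simpa using hhtend)
    simpa [hvdef, sub_sub_cancel] using this
  -- sums
  have hdsum : Summable d := (summable_geometric_of_lt_one hr0 hr1).mul_left K0
  have htsum : ∑' n, d n = K0 * (1 - r)⁻¹ := by
    rw [hddef, tsum_mul_left, tsum_geometric_of_lt_one hr0 hr1]
  have hua : dist (u 0) (φ a) ≤ K0 * (1 - r)⁻¹ := by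
    rw [← htsum]
    exact dist_le_tsum_of_dist_le_of_tendsto₀ _ hustep hdsum hutend
  have hvb : dist (v 0) (φ b) ≤ K0 * (1 - r)⁻¹ := by
    rw [← htsum]
    exact dist_le_tsum_of_dist_le_of_tendsto₀ _ hvstep hdsum hvtend
  have huv0 : u 0 = v 0 := by
    simp only [hudef, hvdef, hhdef, pow_zero, mul_one]
    rw [show a + (b - a) = b by ring, show b - (b - a) = a by ring]
  -- conclude
  have hnormle : ‖φ a - φ b‖ ≤ 2 * (K0 * (1 - r)⁻¹) := by
    calc ‖φ a - φ b‖ = dist (φ a) (φ b) := (dist_eq_norm _ _).symm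
      _ ≤ dist (φ a) (u 0) + dist (u 0) (φ b) := dist_triangle _ _ _
      _ = dist (u 0) (φ a) + dist (v 0) (φ b) := by rw [dist_comm, huv0]
      _ ≤ K0 * (1 - r)⁻¹ + K0 * (1 - r)⁻¹ := add_le_add hua hvb
      _ = 2 * (K0 * (1 - r)⁻¹) := by ring
  -- estimate on r
  have hrle : r ≤ 1 - (2*s - 1)/4 := by
    have hL : (0.6931471803:ℝ) < Real.log 2 := Real.log_two_gt_d9
    have h21 : (0:ℝ) < 2*s - 1 := by linarith
    have h21' : 2*s - 1 < 1 := by linarith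
    have hre : r = (Real.exp ((s - 1/2) * Real.log 2))⁻¹ := by
      rw [hrdef, Real.rpow_def_of_pos (show (0:ℝ) < 2⁻¹ by norm_num), Real.log_inv,
        neg_mul, Real.exp_neg, mul_comm]
    have hexp : 1 + (s - 1/2) * Real.log 2 ≤ Real.exp ((s - 1/2) * Real.log 2) := by
      have := Real.add_one_le_exp ((s - 1/2) * Real.log 2)
      linarith
    have hpos : (0:ℝ) < 1 + (s - 1/2) * Real.log 2 := by nlinarith
    have hstep1 : r ≤ (1 + (s - 1/2) * Real.log 2)⁻¹ := by
      rw [hre]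
      exact inv_anti₀ hpos hexp
    have hstep2 : (1 + (s - 1/2) * Real.log 2)⁻¹ ≤ 1 - (2*s - 1)/4 := by
      rw [inv_le_iff_one_le_mul₀ hpos]
      nlinarith [mul_lt_mul_of_pos_left hL h21, mul_lt_mul_of_pos_left hL (mul_pos h21 h21),
        sq_nonneg (2*s-1)]
    linarith
  have h1r : (2*s-1)/4 ≤ 1 - r := by linarith
  have h1r0 : (0:ℝ) < 1 - r := by linarith
  have hsq2 : ‖φ a - φ b‖ ^ 2 ≤ (2 * (K0 * (1 - r)⁻¹)) ^ 2 :=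
    pow_le_pow_left₀ (norm_nonneg _) hnormle 2
  have hsq3 : (2 * (K0 * (1 - r)⁻¹)) ^ 2 = 8 * I * (b - a) ^ (2*s-1) * ((1-r)⁻¹) ^ 2 := by
    have h4 : K0 ^ 2 = 2 * I * (b - a) ^ (2*s-1) := by
      rw [hK0def, mul_pow, Real.sq_sqrt (show (0:ℝ) ≤ 2*I by linarith),
        ← Real.rpow_natCast ((b-a) ^ (s-1/2)) 2, ← Real.rpow_mul hba.le]
      rw [show (s - 1/2) * ((2:ℕ):ℝ) = 2*s - 1 from by push_cast; ring]
    calc (2 * (K0 * (1 - r)⁻¹)) ^ 2 = 4 * K0 ^ 2 * ((1-r)⁻¹) ^ 2 := by ring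
      _ = 8 * I * (b - a) ^ (2*s-1) * ((1-r)⁻¹) ^ 2 := by rw [h4]; ring
  have hfinal : 8 * I * (b - a) ^ (2*s-1) * ((1-r)⁻¹) ^ 2 ≤
      (16 * (2 * s + 1) / (2 * s - 1)) ^ 2 * (b - a) ^ (2 * s - 1) * I := by
    have h21 : (0:ℝ) < 2*s - 1 := by linarith
    have hinv : (1-r)⁻¹ ≤ 4 / (2*s-1) := by
      rw [inv_le_comm₀ h1r0 (div_pos (by norm_num) h21), inv_div]
      exact h1r
    have hinv0 : 0 ≤ (1-r)⁻¹ := (inv_pos.2 h1r0).le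
    have hinv2 : ((1-r)⁻¹) ^ 2 ≤ (4 / (2*s-1)) ^ 2 := pow_le_pow_left₀ hinv0 hinv 2
    have hP : (0:ℝ) ≤ I * (b - a) ^ (2*s-1) := mul_nonneg hI0 (Real.rpow_nonneg hba.le _)
    have hconst : 8 * (4 / (2*s-1)) ^ 2 ≤ (16 * (2 * s + 1) / (2 * s - 1)) ^ 2 := by
      have hsq21 : (0:ℝ) < (2*s-1)^2 := pow_pos h21 2
      have hnum : (8:ℝ) * 4 ^ 2 ≤ (16 * (2*s+1)) ^ 2 := by nlinarith
      calc 8 * (4 / (2*s-1)) ^ 2 = 8 * 4 ^ 2 / (2*s-1) ^ 2 := by rw [div_pow]; ring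
        _ ≤ (16 * (2*s+1)) ^ 2 / (2*s-1) ^ 2 := by
            gcongr
        _ = (16 * (2 * s + 1) / (2 * s - 1)) ^ 2 := by rw [div_pow]
    calc 8 * I * (b - a) ^ (2*s-1) * ((1-r)⁻¹) ^ 2
        ≤ 8 * I * (b - a) ^ (2*s-1) * (4 / (2*s-1)) ^ 2 := by
          refine mul_le_mul_of_nonneg_left hinv2 (by positivity)
      _ = 8 * (4 / (2*s-1)) ^ 2 * (I * (b - a) ^ (2*s-1)) := by ring
      _ ≤ (16 * (2 * s + 1) / (2 * s - 1)) ^ 2 * (I * (b - a) ^ (2*s-1)) :=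
          mul_le_mul_of_nonneg_right hconst hP
      _ = (16 * (2 * s + 1) / (2 * s - 1)) ^ 2 * (b - a) ^ (2 * s - 1) * I := by ring
  calc ‖φ a - φ b‖ ^ 2 ≤ (2 * (K0 * (1 - r)⁻¹)) ^ 2 := hsq2
    _ = 8 * I * (b - a) ^ (2*s-1) * ((1-r)⁻¹) ^ 2 := hsq3
    _ ≤ (16 * (2 * s + 1) / (2 * s - 1)) ^ 2 * (b - a) ^ (2 * s - 1) * I := hfinal
end

section
/- (Fractional Poincaré–Sobolev on an interval) Let 1/2 < s < 1. There is a constant C_s such that for every bounded interval Q ⊂ ℝ and every continuous ψ on Q̄ with ∫_Q ψ dx = 0 and finite seminorm t_Q[ψ] := a_{1,s} ∫∫_{Q×Q} |ψ(x)-ψ(y)|²/|x-y|^{1+2s} dx dy, one has sup_Q |ψ|² ≤ C_s |Q|^{2s-1} t_Q[ψ]. -/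
open MeasureTheory

lemma cs_integral {α : Type*} [MeasurableSpace α] (μ : Measure α) [IsFiniteMeasure μ]
    {h : α → ℝ} (hh : Integrable h μ) (hh2 : Integrable (fun x => h x ^ 2) μ) :
    (∫ x, h x ∂μ) ^ 2 ≤ (μ Set.univ).toReal * ∫ x, h x ^ 2 ∂μ := by
  set M := (μ Set.univ).toReal with hM
  have hM0 : 0 ≤ M := ENNReal.toReal_nonneg
  rcases eq_or_lt_of_le hM0 with h0 | hMpos
  · have hu : μ Set.univ = 0 := by
      rcases (ENNReal.toReal_eq_zero_iff _).1 h0.symm with h | h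
      · exact h
      · exact absurd h (measure_ne_top μ _)
    have hμ : μ = 0 := Measure.measure_univ_eq_zero.mp hu
    simp [hμ]
  · set t := (∫ x, h x ∂μ) / M with ht
    have key : 0 ≤ ∫ x, (h x - t) ^ 2 ∂μ := integral_nonneg (fun x => sq_nonneg _)
    have expand : ∫ x, (h x - t) ^ 2 ∂μ
        = (∫ x, h x ^ 2 ∂μ) - 2 * t * (∫ x, h x ∂μ) + t ^ 2 * M := by
      have hfe : (fun x => (h x - t) ^ 2) = fun x => (h x ^ 2 - (2 * t) * h x) + t ^ 2 := by
        funext x; ring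
      rw [hfe]
      have h3 : Integrable (fun x => h x ^ 2 - 2 * t * h x) μ := hh2.sub (hh.const_mul (2*t))
      rw [integral_add h3 (integrable_const _)]
      rw [integral_sub hh2 (hh.const_mul (2*t)), MeasureTheory.integral_const_mul, integral_const, smul_eq_mul, measureReal_def, ← hM]
      ring
    have hI : ∫ x, h x ∂μ = t * M := by rw [ht]; field_simp
    nlinarith [key, expand, sq_nonneg t, hMpos]

noncomputable def halveStep (x : ℝ) (p : ℝ × ℝ) : ℝ × ℝ :=
  if x ≤ (p.1 + p.2) / 2 then (p.1, (p.1 + p.2) / 2) else ((p.1 + p.2) / 2, p.2)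

lemma halveStep_spec (x : ℝ) (p : ℝ × ℝ) (h1 : p.1 ≤ x) (h2 : x ≤ p.2) :
    p.1 ≤ (halveStep x p).1 ∧ (halveStep x p).1 ≤ x ∧ x ≤ (halveStep x p).2 ∧
      (halveStep x p).2 ≤ p.2 ∧ (halveStep x p).2 - (halveStep x p).1 = (p.2 - p.1) / 2 := by
  unfold halveStep
  split_ifs with hc
  · refine ⟨le_refl _, h1, hc, ?_, by ring⟩
    simp only
    linarith
  · push_neg at hc
    refine ⟨?_, hc.le, h2, le_refl _, by ring⟩
    simp only
    linarith

lemma avg_key (s : ℝ) (hs : 1 / 2 < s) (ψ : ℝ → ℂ) (a b : ℝ)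
    (hψ : ContinuousOn ψ (Set.Icc a b))
    (hg : IntegrableOn (fun p : ℝ × ℝ => ‖ψ p.1 - ψ p.2‖ ^ 2 / |p.1 - p.2| ^ (1 + 2 * s))
      (Set.Icc a b ×ˢ Set.Icc a b))
    (c d c' d' : ℝ) (hac : a ≤ c) (hcc : c ≤ c') (hcd : c' ≤ d') (hdd : d' ≤ d) (hdb : d ≤ b)
    (hcd0 : c < d) (hhalf : d' - c' = (d - c) / 2) :
    ‖(d' - c')⁻¹ • (∫ y in Set.Icc c' d', ψ y) - (d - c)⁻¹ • (∫ y in Set.Icc c d, ψ y)‖ ^ 2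
      ≤ 2 * (d - c) ^ (2 * s - 1) *
        (∫ u in Set.Icc a b, ∫ v in Set.Icc a b, ‖ψ u - ψ v‖ ^ 2 / |u - v| ^ (1 + 2 * s)) := by
  set g : ℝ × ℝ → ℝ := fun p => ‖ψ p.1 - ψ p.2‖ ^ 2 / |p.1 - p.2| ^ (1 + 2 * s) with hgdef
  set Q : Set ℝ := Set.Icc a b with hQ
  set T : ℝ := ∫ u in Q, ∫ v in Q, g (u, v) with hTdef
  have hgnn : ∀ p, 0 ≤ g p := fun p =>
    div_nonneg (by positivity) (Real.rpow_nonneg (abs_nonneg _) _)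
  have hT0 : 0 ≤ T := integral_nonneg fun u => integral_nonneg fun v => hgnn _
  set ℓ : ℝ := d - c with hldef
  have hℓ : 0 < ℓ := sub_pos.2 hcd0
  have hℓ' : 0 < ℓ / 2 := by linarith
  set I : Set ℝ := Set.Icc c d with hI
  set J : Set ℝ := Set.Icc c' d' with hJ
  have hJI : J ⊆ I := Set.Icc_subset_Icc hcc hdd
  have hIQ : I ⊆ Q := Set.Icc_subset_Icc hac hdb
  have hJQ : J ⊆ Q := hJI.trans hIQ
  have hψQ : IntegrableOn ψ Q := hψ.integrableOn_compact isCompact_Icc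
  have hψI : IntegrableOn ψ I := hψQ.mono_set hIQ
  have hψJ : IntegrableOn ψ J := hψQ.mono_set hJQ
  have volI : (volume I).toReal = ℓ := by
    rw [hI, Real.volume_Icc, ENNReal.toReal_ofReal hℓ.le]
  have volJ : (volume J).toReal = ℓ / 2 := by
    rw [hJ, Real.volume_Icc, hhalf, ENNReal.toReal_ofReal hℓ'.le]
  have hIfin : volume I < ⊤ := by rw [hI, Real.volume_Icc]; exact ENNReal.ofReal_lt_top
  have hJfin : volume J < ⊤ := by rw [hJ, Real.volume_Icc]; exact ENNReal.ofReal_lt_top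
  -- inner integral
  have inner : ∀ u : ℝ, (∫ v in I, (ψ u - ψ v)) = ℓ • ψ u - ∫ v in I, ψ v := by
    intro u
    rw [integral_sub (integrableOn_const (C := ψ u) hIfin.ne) hψI, setIntegral_const, measureReal_def, volI]
  have EqE : (∫ u in J, ∫ v in I, (ψ u - ψ v))
      = ℓ • (∫ y in J, ψ y) - (ℓ / 2) • (∫ y in I, ψ y) := by
    rw [integral_congr_ae (Filter.Eventually.of_forall inner)]
    have hsm : IntegrableOn (fun y => ℓ • ψ y) J := hψJ.smul ℓ
    rw [integral_sub hsm (integrableOn_const hJfin.ne), integral_smul,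
      setIntegral_const, measureReal_def, volJ]
  -- continuity of the difference on J ×ˢ I
  have hFcont : ContinuousOn (fun p : ℝ × ℝ => ψ p.1 - ψ p.2) (J ×ˢ I) := by
    apply ContinuousOn.sub
    · exact hψ.comp continuousOn_fst (fun p hp => hJQ hp.1)
    · exact hψ.comp continuousOn_snd (fun p hp => hIQ hp.2)
  have hcompJI : IsCompact (J ×ˢ I) := isCompact_Icc.prod isCompact_Icc
  have hmeasJI : MeasurableSet (J ×ˢ I) := (measurableSet_Icc.prod measurableSet_Icc)
  have hFint : IntegrableOn (fun p : ℝ × ℝ => ψ p.1 - ψ p.2) (J ×ˢ I) :=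
    hFcont.integrableOn_compact hcompJI
  have hprodE : (∫ p in J ×ˢ I, (ψ p.1 - ψ p.2)) = ∫ u in J, ∫ v in I, (ψ u - ψ v) := by
    rw [MeasureTheory.Measure.volume_eq_prod]
    exact setIntegral_prod _ (by rwa [← MeasureTheory.Measure.volume_eq_prod])
  have hnormE : ‖∫ u in J, ∫ v in I, (ψ u - ψ v)‖ ≤ ∫ p in J ×ˢ I, ‖ψ p.1 - ψ p.2‖ := by
    rw [← hprodE]; exact norm_integral_le_integral_norm _
  -- Cauchy-Schwarz
  have hhint : IntegrableOn (fun p : ℝ × ℝ => ‖ψ p.1 - ψ p.2‖) (J ×ˢ I) := hFint.norm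
  have hh2int : IntegrableOn (fun p : ℝ × ℝ => ‖ψ p.1 - ψ p.2‖ ^ 2) (J ×ˢ I) :=
    ((hFcont.norm).pow 2).integrableOn_compact hcompJI
  have hJIfin : volume (J ×ˢ I) < ⊤ := hcompJI.measure_lt_top
  haveI : IsFiniteMeasure (volume.restrict (J ×ˢ I)) :=
    ⟨by rwa [Measure.restrict_apply_univ]⟩
  have volJI : (volume (J ×ˢ I)).toReal = (ℓ / 2) * ℓ := by
    rw [MeasureTheory.Measure.volume_eq_prod, Measure.prod_prod, ENNReal.toReal_mul, volI, volJ]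
  have hCS : (∫ p in J ×ˢ I, ‖ψ p.1 - ψ p.2‖) ^ 2
      ≤ ((ℓ / 2) * ℓ) * ∫ p in J ×ˢ I, ‖ψ p.1 - ψ p.2‖ ^ 2 := by
    have := cs_integral (volume.restrict (J ×ˢ I)) hhint hh2int
    rwa [Measure.restrict_apply_univ, volJI] at this
  -- pointwise bound
  have hpt : ∀ p ∈ J ×ˢ I, ‖ψ p.1 - ψ p.2‖ ^ 2 ≤ ℓ ^ (1 + 2 * s) * g p := by
    rintro ⟨u, v⟩ ⟨hu, hv⟩
    have h1 : c ≤ u := (hJI hu).1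
    have h2 : u ≤ d := (hJI hu).2
    have h3 : c ≤ v := hv.1
    have h4 : v ≤ d := hv.2
    have huv : |u - v| ≤ ℓ := by
      rw [abs_le, hldef]; constructor <;> linarith
    by_cases he : u = v
    · have : ‖ψ u - ψ v‖ ^ 2 = 0 := by rw [he]; simp
      rw [this]
      exact mul_nonneg (Real.rpow_nonneg hℓ.le _) (hgnn _)
    · have habs : (0:ℝ) < |u - v| := abs_pos.2 (sub_ne_zero.2 he)
      have hpow : (0:ℝ) < |u - v| ^ (1 + 2 * s) := Real.rpow_pos_of_pos habs _
      have hrw : ‖ψ u - ψ v‖ ^ 2 = g (u, v) * |u - v| ^ (1 + 2 * s) := by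
        rw [hgdef]; field_simp
      rw [hrw, mul_comm (ℓ ^ (1 + 2 * s))]
      exact mul_le_mul_of_nonneg_left
        (Real.rpow_le_rpow (abs_nonneg _) huv (by linarith)) (hgnn _)
  have hgJIint : IntegrableOn g (J ×ˢ I) := hg.mono_set (Set.prod_mono hJQ hIQ)
  have hmono2 : (∫ p in J ×ˢ I, ‖ψ p.1 - ψ p.2‖ ^ 2)
      ≤ ℓ ^ (1 + 2 * s) * ∫ p in J ×ˢ I, g p := by
    rw [← MeasureTheory.integral_const_mul]
    exact setIntegral_mono_on hh2int (hgJIint.const_mul _) hmeasJI hpt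
  have hgJI_le : (∫ p in J ×ˢ I, g p) ≤ T := by
    have h1 : (∫ p in J ×ˢ I, g p) ≤ ∫ p in Q ×ˢ Q, g p :=
      setIntegral_mono_set hg (Filter.Eventually.of_forall fun p => hgnn p)
        ((Set.prod_mono hJQ hIQ).eventuallyLE)
    have h2 : (∫ p in Q ×ˢ Q, g p) = T := by
      rw [hTdef, MeasureTheory.Measure.volume_eq_prod]
      exact setIntegral_prod _ (by rwa [← MeasureTheory.Measure.volume_eq_prod])
    linarith
  -- assemble
  have hAdiff : (d' - c')⁻¹ • (∫ y in J, ψ y) - ℓ⁻¹ • (∫ y in I, ψ y)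
      = ((ℓ / 2)⁻¹ * ℓ⁻¹) • (∫ u in J, ∫ v in I, (ψ u - ψ v)) := by
    rw [EqE, smul_sub, smul_smul, smul_smul, hhalf]
    congr 1
    · congr 1; field_simp
    · congr 1; field_simp
  have hnorm : ‖(d' - c')⁻¹ • (∫ y in J, ψ y) - ℓ⁻¹ • (∫ y in I, ψ y)‖
      ≤ ((ℓ / 2)⁻¹ * ℓ⁻¹) * ∫ p in J ×ˢ I, ‖ψ p.1 - ψ p.2‖ := by
    rw [hAdiff, norm_smul]
    have hn : ‖(ℓ / 2)⁻¹ * ℓ⁻¹‖ = (ℓ / 2)⁻¹ * ℓ⁻¹ := Real.norm_of_nonneg (by positivity)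
    rw [hn]
    exact mul_le_mul_of_nonneg_left hnormE (by positivity)
  have hint_nonneg : (0:ℝ) ≤ ∫ p in J ×ˢ I, ‖ψ p.1 - ψ p.2‖ :=
    integral_nonneg fun p => norm_nonneg _
  calc ‖(d' - c')⁻¹ • (∫ y in J, ψ y) - ℓ⁻¹ • (∫ y in I, ψ y)‖ ^ 2
      ≤ (((ℓ / 2)⁻¹ * ℓ⁻¹) * ∫ p in J ×ˢ I, ‖ψ p.1 - ψ p.2‖) ^ 2 :=
        pow_le_pow_left₀ (norm_nonneg _) hnorm 2
    _ = ((ℓ / 2)⁻¹ * ℓ⁻¹) ^ 2 * (∫ p in J ×ˢ I, ‖ψ p.1 - ψ p.2‖) ^ 2 := by ring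
    _ ≤ ((ℓ / 2)⁻¹ * ℓ⁻¹) ^ 2 * (((ℓ / 2) * ℓ) * ∫ p in J ×ˢ I, ‖ψ p.1 - ψ p.2‖ ^ 2) :=
        mul_le_mul_of_nonneg_left hCS (by positivity)
    _ ≤ ((ℓ / 2)⁻¹ * ℓ⁻¹) ^ 2 * (((ℓ / 2) * ℓ) * (ℓ ^ (1 + 2 * s) * T)) := by
        apply mul_le_mul_of_nonneg_left _ (by positivity)
        apply mul_le_mul_of_nonneg_left _ (by positivity)
        exact hmono2.trans (mul_le_mul_of_nonneg_left hgJI_le (Real.rpow_nonneg hℓ.le _))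
    _ = 2 * ℓ ^ (2 * s - 1) * T := by
        have h21 : (1 + 2 * s) = (2:ℝ) + (2 * s - 1) := by ring
        rw [h21, Real.rpow_add hℓ, Real.rpow_two]
        field_simp

/-- Fractional Poincaré–Sobolev inequality on an interval: for `1/2 < s < 1` there is a
constant `C_s` such that every continuous mean-zero `ψ` on a bounded interval `Q = [a,b]`
with finite seminorm `t_Q[ψ] = a_{1,s} ∬_{Q×Q} |ψ(x)-ψ(y)|²/|x-y|^{1+2s}` satisfies
`sup_Q |ψ|² ≤ C_s |Q|^{2s-1} t_Q[ψ]`. -/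
theorem fractional_poincare_sobolev (s : ℝ) (hs : 1 / 2 < s) (hs1 : s < 1)
    (a1s : ℝ) (ha1s : 0 < a1s) :
    ∃ C : ℝ, ∀ a b : ℝ, a < b → ∀ ψ : ℝ → ℂ, ContinuousOn ψ (Set.Icc a b) →
      (∫ x in Set.Icc a b, ψ x) = 0 →
      IntegrableOn (fun p : ℝ × ℝ => ‖ψ p.1 - ψ p.2‖ ^ 2 / |p.1 - p.2| ^ (1 + 2 * s))
        (Set.Icc a b ×ˢ Set.Icc a b) →
      ∀ x ∈ Set.Icc a b,
        ‖ψ x‖ ^ 2 ≤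
          C * (b - a) ^ (2 * s - 1) *
            (a1s * ∫ u in Set.Icc a b, ∫ v in Set.Icc a b,
              ‖ψ u - ψ v‖ ^ 2 / |u - v| ^ (1 + 2 * s)) := by
  have hs2 : (0:ℝ) < s - 1 / 2 := by linarith
  set r : ℝ := (1 / 2 : ℝ) ^ (s - 1 / 2) with hrdef
  have hr0 : 0 < r := Real.rpow_pos_of_pos (by norm_num) _
  have hr1 : r < 1 := Real.rpow_lt_one (by norm_num) (by norm_num) hs2
  have h1r : 0 < 1 - r := by linarith
  refine ⟨2 / ((1 - r) ^ 2 * a1s), ?_⟩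
  intro a b hab ψ hψ hmean hg x hx
  set T : ℝ := ∫ u in Set.Icc a b, ∫ v in Set.Icc a b,
      ‖ψ u - ψ v‖ ^ 2 / |u - v| ^ (1 + 2 * s) with hTdef
  have hT0 : 0 ≤ T := integral_nonneg fun u => integral_nonneg fun v =>
    div_nonneg (by positivity) (Real.rpow_nonneg (abs_nonneg _) _)
  have hL : (0:ℝ) < b - a := sub_pos.2 hab
  -- the nested intervals
  set P : ℕ → ℝ × ℝ := fun k => (halveStep x)^[k] (a, b) with hPdef
  have hP0 : P 0 = (a, b) := rfl
  have hPs : ∀ k, P (k + 1) = halveStep x (P k) := by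
    intro k; rw [hPdef]; exact Function.iterate_succ_apply' _ _ _
  have inv : ∀ k, a ≤ (P k).1 ∧ (P k).1 ≤ x ∧ x ≤ (P k).2 ∧ (P k).2 ≤ b ∧
      (P k).2 - (P k).1 = (b - a) / 2 ^ k := by
    intro k
    induction k with
    | zero => rw [hP0]; exact ⟨le_refl _, hx.1, hx.2, le_refl _, by norm_num⟩
    | succ n ih =>
      obtain ⟨h1, h2, h3, h4, h5⟩ := ih
      obtain ⟨g1, g2, g3, g4, g5⟩ := halveStep_spec x (P n) h2 h3
      rw [hPs n]
      refine ⟨h1.trans g1, g2, g3, g4.trans h4, ?_⟩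
      rw [g5, h5, pow_succ]; ring
  have hlen : ∀ k, (0:ℝ) < (P k).2 - (P k).1 := by
    intro k; rw [(inv k).2.2.2.2]; positivity
  -- the averages
  set A : ℕ → ℂ := fun k => ((P k).2 - (P k).1)⁻¹ • ∫ y in Set.Icc (P k).1 (P k).2, ψ y
    with hAdef
  have hA0 : A 0 = 0 := by
    rw [hAdef]; simp only [hP0]; rw [hmean]; simp
  -- step bound
  have hstep : ∀ k, ‖A (k + 1) - A k‖ ^ 2 ≤ 2 * ((b - a) / 2 ^ k) ^ (2 * s - 1) * T := by
    intro k
    obtain ⟨h1, h2, h3, h4, h5⟩ := inv k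
    obtain ⟨g1, g2, g3, g4, g5⟩ := halveStep_spec x (P k) h2 h3
    have hcd0 : (P k).1 < (P k).2 := by have := hlen k; linarith
    have := avg_key s hs ψ a b hψ hg (P k).1 (P k).2 (P (k+1)).1 (P (k+1)).2
      h1 (by rw [hPs]; exact g1) (by rw [hPs]; exact g2.trans g3)
      (by rw [hPs]; exact g4) h4 hcd0 (by rw [hPs]; exact g5)
    rw [← h5]
    exact this
  -- geometric bound for each step
  set B : ℕ → ℝ := fun k => Real.sqrt (2 * T) * (b - a) ^ (s - 1 / 2) * r ^ k with hBdef
  have hB0 : ∀ k, 0 ≤ B k := fun k => by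
    apply mul_nonneg (mul_nonneg (Real.sqrt_nonneg _) (Real.rpow_nonneg hL.le _))
    positivity
  have hBsq : ∀ k, B k ^ 2 = 2 * ((b - a) / 2 ^ k) ^ (2 * s - 1) * T := by
    intro k
    have e1 : ((b - a) / 2 ^ k : ℝ) = (b - a) * (1 / 2) ^ k := by rw [div_eq_mul_inv, one_div, inv_pow]
    have e2 : ((b - a) * (1 / 2 : ℝ) ^ k) ^ (2 * s - 1)
        = (b - a) ^ (2 * s - 1) * ((1 / 2 : ℝ) ^ k) ^ (2 * s - 1) :=
      Real.mul_rpow hL.le (by positivity)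
    have e3 : (((1 / 2 : ℝ) ^ k) ^ (2 * s - 1)) = (r ^ k) ^ 2 := by
      rw [hrdef, ← Real.rpow_natCast ((1/2 : ℝ) ^ (s - 1/2)) k,
        ← Real.rpow_natCast (1/2 : ℝ) k, ← Real.rpow_mul (by norm_num),
        ← Real.rpow_mul (by norm_num), ← Real.rpow_natCast
          ((1/2 : ℝ) ^ ((s - 1/2) * (k:ℝ))) 2, ← Real.rpow_mul (by norm_num)]
      congr 1
      ring
    have e4 : ((b - a) ^ (s - 1/2)) ^ 2 = (b - a) ^ (2 * s - 1) := by
      rw [← Real.rpow_natCast ((b - a) ^ (s - 1/2)) 2, ← Real.rpow_mul hL.le]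
      norm_num
      congr 1
      ring
    have e5 : Real.sqrt (2 * T) ^ 2 = 2 * T := Real.sq_sqrt (by linarith)
    rw [hBdef]
    simp only
    rw [e1, e2, e3]
    rw [mul_pow, mul_pow, e5, e4]
    ring
  have hstep2 : ∀ k, ‖A (k + 1) - A k‖ ≤ B k := by
    intro k
    have h := hstep k
    rw [← hBsq k] at h
    exact (pow_le_pow_iff_left₀ (norm_nonneg _) (hB0 k) two_ne_zero).1 h
  -- telescoping
  have htel : ∀ n, ‖A n‖ ≤ ∑ k ∈ Finset.range n, B k := by
    intro n
    have h1 : A n = ∑ k ∈ Finset.range n, (A (k + 1) - A k) := by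
      rw [Finset.sum_range_sub (fun k => A k), hA0, sub_zero]
    rw [h1]
    exact (norm_sum_le _ _).trans (Finset.sum_le_sum fun k _ => hstep2 k)
  -- geometric series bound
  set S : ℝ := Real.sqrt (2 * T) * (b - a) ^ (s - 1 / 2) * (1 / (1 - r)) with hSdef
  have hsum : ∀ n, (∑ k ∈ Finset.range n, B k) ≤ S := by
    intro n
    have h1 : (∑ k ∈ Finset.range n, B k)
        = Real.sqrt (2 * T) * (b - a) ^ (s - 1 / 2) * ∑ k ∈ Finset.range n, r ^ k := by
      rw [Finset.mul_sum]
    have h2 : (∑ k ∈ Finset.range n, r ^ k) ≤ 1 / (1 - r) := by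
      have hrn : (0:ℝ) ≤ r ^ n := by positivity
      rw [geom_sum_eq hr1.ne n]
      have heq : (r ^ n - 1) / (r - 1) = (1 - r ^ n) / (1 - r) := by
        rw [div_eq_div_iff (by linarith) (by linarith)]
        ring
      rw [heq]
      gcongr
      linarith
    rw [h1, hSdef]
    apply mul_le_mul_of_nonneg_left h2
    exact mul_nonneg (Real.sqrt_nonneg _) (Real.rpow_nonneg hL.le _)
  -- limit: ψ x is approximated by A n
  have hlim : ∀ ε : ℝ, 0 < ε → ∃ n, ‖ψ x - A n‖ ≤ ε := by
    intro ε hε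
    have hcx : ContinuousWithinAt ψ (Set.Icc a b) x := hψ x hx
    rw [Metric.continuousWithinAt_iff] at hcx
    obtain ⟨δ, hδ0, hδ⟩ := hcx ε hε
    obtain ⟨n, hn⟩ := pow_unbounded_of_one_lt ((b - a) / δ) (one_lt_two (α := ℝ))
    refine ⟨n, ?_⟩
    obtain ⟨h1, h2, h3, h4, h5⟩ := inv n
    have hℓn : (0:ℝ) < (P n).2 - (P n).1 := hlen n
    have hℓδ : (P n).2 - (P n).1 < δ := by
      rw [h5, div_lt_iff₀' (by positivity : (0:ℝ) < (2:ℝ) ^ n)]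
      rw [div_lt_iff₀ hδ0] at hn
      calc b - a < 2 ^ n * δ := hn
        _ = 2 ^ n * δ := rfl
    set In : Set ℝ := Set.Icc (P n).1 (P n).2 with hIndef
    have hInQ : In ⊆ Set.Icc a b := Set.Icc_subset_Icc h1 h4
    have hInfin : volume In < ⊤ := by rw [hIndef, Real.volume_Icc]; exact ENNReal.ofReal_lt_top
    have hψIn : IntegrableOn ψ In :=
      (hψ.integrableOn_compact isCompact_Icc).mono_set hInQ
    have volIn : (volume In).toReal = (P n).2 - (P n).1 := by
      rw [hIndef, Real.volume_Icc, ENNReal.toReal_ofReal hℓn.le]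
    have heq : ψ x - A n = ((P n).2 - (P n).1)⁻¹ • ∫ y in In, (ψ x - ψ y) := by
      rw [integral_sub (integrableOn_const (C := ψ x) hInfin.ne) hψIn, setIntegral_const, measureReal_def, volIn,
        hAdef]
      simp only
      rw [smul_sub, smul_smul, inv_mul_cancel₀ hℓn.ne', one_smul]
    have hbound : ‖∫ y in In, (ψ x - ψ y)‖ ≤ ε * ((P n).2 - (P n).1) := by
      rw [← volIn]
      apply norm_setIntegral_le_of_norm_le_const hInfin
      · intro y hy
        rcases eq_or_ne y x with hteq | htne
        · simp [hteq, hε.le]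
        · have hdist : dist y x < δ := by
            rw [Real.dist_eq, abs_lt]
            have := hy.1; have := hy.2
            constructor <;> nlinarith [h2, h3, hℓδ]
          have := hδ (hInQ hy) hdist
          rw [dist_comm, dist_eq_norm] at this
          exact this.le
    rw [heq, norm_smul, Real.norm_of_nonneg (by positivity)]
    calc ((P n).2 - (P n).1)⁻¹ * ‖∫ y in In, (ψ x - ψ y)‖
        ≤ ((P n).2 - (P n).1)⁻¹ * (ε * ((P n).2 - (P n).1)) :=
          mul_le_mul_of_nonneg_left hbound (by positivity)
      _ = ε := by field_simp
  -- conclude : ‖ψ x‖ ≤ S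
  have hfinal : ‖ψ x‖ ≤ S := by
    apply le_of_forall_pos_le_add
    intro ε hε
    obtain ⟨n, hn⟩ := hlim ε hε
    calc ‖ψ x‖ = ‖(ψ x - A n) + A n‖ := by ring_nf
      _ ≤ ‖ψ x - A n‖ + ‖A n‖ := norm_add_le _ _
      _ ≤ ε + S := add_le_add hn ((htel n).trans (hsum n))
      _ = S + ε := by ring
  -- square and finish
  have hS0 : 0 ≤ S := by
    apply mul_nonneg (mul_nonneg (Real.sqrt_nonneg _) (Real.rpow_nonneg hL.le _))
    positivity
  have hsq : ‖ψ x‖ ^ 2 ≤ S ^ 2 := pow_le_pow_left₀ (norm_nonneg _) hfinal 2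
  have hSsq : S ^ 2 = 2 / ((1 - r) ^ 2 * a1s) * (b - a) ^ (2 * s - 1) * (a1s * T) := by
    rw [hSdef]
    have e4 : ((b - a) ^ (s - 1/2)) ^ 2 = (b - a) ^ (2 * s - 1) := by
      rw [← Real.rpow_natCast ((b - a) ^ (s - 1/2)) 2, ← Real.rpow_mul hL.le]
      norm_num
      congr 1
      ring
    have e5 : Real.sqrt (2 * T) ^ 2 = 2 * T := Real.sq_sqrt (by linarith)
    rw [mul_pow, mul_pow, e5, e4]
    field_simp
  rw [hSsq] at hsq
  exact hsq
end
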